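/- Let (Ω, F, ℙ) be a probability space, δ > 0, ε ∈ (0,1), C < ∞, n₀ ∈ ℕ, and p ∈ (0,1) with (1 − ε)^(δ/(2+δ)) < 1 − p. Let τ : Ω → ℕ ∪ {∞} be measurable with ℙ(τ > n) ≤ (1 − ε)^(n−1) for all n ≥ 1, and let (Δₙ)_{n≥0} be real random variables with E[|Δₙ|^(2+δ)] < ∞ for all n, with Δₙ = 0 almost surely on {τ ≤ n} for all n ≥ 1, and with E[|Δₙ|^(2+δ)] ≤ C for all n ≥ n₀. Let G be a random variable, independent of the σ-algebra generated by (Δₙ)_{n≥0}, with ℙ(G = n) = (1 − p)^n · p for n ∈ {0,1,2,…}, so that ℙ(n ≤ G) = (1 − p)^n. Define Zₘ = ∑_{n=0}^{m} Δₙ · 1{n ≤ G} / (1 − p)^n. Then (Zₘ)_{m≥0} is a Cauchy sequence in L²(ℙ): sup_{m'≥m} E[(Z_{m'} − Zₘ)²] → 0 as m → ∞. -/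

import Mathlib

open MeasureTheory ProbabilityTheory Filter
open scoped ENNReal NNReal

section RGAux

lemma rg_geomTail {Ω : Type*} [MeasurableSpace Ω] (μ : Measure Ω) [IsProbabilityMeasure μ]
    {p : ℝ} (hp1 : p < 1) (G : Ω → ℕ) (hG : Measurable G)
    (hGgeom : ∀ n : ℕ, μ {ω | G ω = n} = ENNReal.ofReal ((1 - p) ^ n * p)) (j : ℕ) :
    μ {ω | j ≤ G ω} = ENNReal.ofReal ((1 - p) ^ j) := by
  have hc0 : (0:ℝ) < 1 - p := by linarith
  have hmeas : ∀ i : ℕ, MeasurableSet {ω | G ω = i} := fun i => hG (measurableSet_singleton i)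
  have hsets : ∀ a : ℕ, {ω | a ≤ G ω} = ⋃ i : ℕ, {ω | G ω = a + i} := by
    intro a; ext ω
    simp only [Set.mem_setOf_eq, Set.mem_iUnion]
    constructor
    · intro h; exact ⟨G ω - a, by omega⟩
    · rintro ⟨i, hi⟩; omega
  have hdis : ∀ a : ℕ, Pairwise (Function.onFun Disjoint fun i : ℕ => {ω | G ω = a + i}) := by
    intro a i k hik
    simp only [Function.onFun, Set.disjoint_left, Set.mem_setOf_eq]
    intro ω h1 h2; exact hik (by omega)
  have hμ : ∀ a : ℕ, μ {ω | a ≤ G ω} = ∑' i : ℕ, ENNReal.ofReal ((1-p)^(a+i) * p) := by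
    intro a
    rw [hsets a, measure_iUnion (hdis a) (fun i => hmeas (a+i))]
    simp_rw [hGgeom]
  have h1 : ∑' i : ℕ, ENNReal.ofReal ((1-p)^i * p) = 1 := by
    have h0 : {ω : Ω | 0 ≤ G ω} = Set.univ := by ext ω; simp
    have := hμ 0
    rw [h0, measure_univ] at this
    simp only [zero_add] at this
    exact this.symm
  have hfac : ∀ i : ℕ, ENNReal.ofReal ((1-p)^(j+i)*p)
      = ENNReal.ofReal ((1-p)^j) * ENNReal.ofReal ((1-p)^i * p) := by
    intro i
    rw [← ENNReal.ofReal_mul (by positivity)]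
    congr 1
    rw [pow_add]; ring
  rw [hμ j]
  simp_rw [hfac]
  rw [ENNReal.tsum_mul_left, h1, mul_one]

lemma rg_memLp {Ω : Type*} [MeasurableSpace Ω] {μ : Measure Ω} {f : Ω → ℝ}
    (hf : Measurable f) {q : ℝ} (hq0 : 0 < q)
    (hint : Integrable (fun ω => |f ω| ^ q) μ) : MemLp f (ENNReal.ofReal q) μ := by
  have hq_ne : ENNReal.ofReal q ≠ 0 := by simp [hq0, hq0.not_ge]
  have h := memLp_norm_rpow_iff (μ := μ) (p := ENNReal.ofReal q) (q := ENNReal.ofReal q)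
    hf.aestronglyMeasurable hq_ne ENNReal.ofReal_ne_top
  rw [ENNReal.div_self hq_ne ENNReal.ofReal_ne_top, memLp_one_iff_integrable] at h
  apply h.mp
  have : (fun x => ‖f x‖ ^ (ENNReal.ofReal q).toReal) = fun ω => |f ω| ^ q := by
    funext ω; rw [ENNReal.toReal_ofReal hq0.le, Real.norm_eq_abs]
  rw [this]; exact hint

lemma rg_sq_int {Ω : Type*} [MeasurableSpace Ω] {μ : Measure Ω} [IsProbabilityMeasure μ]
    {f : Ω → ℝ} (hf : Measurable f) {δ : ℝ} (hδ : 0 < δ)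
    (hint : Integrable (fun ω => |f ω| ^ ((2:ℝ) + δ)) μ) :
    Integrable (fun ω => (f ω)^2) μ := by
  have hq0 : (0:ℝ) < 2 + δ := by linarith
  have hm : MemLp f (ENNReal.ofReal (2+δ)) μ := rg_memLp hf hq0 hint
  have h2 : MemLp f 2 μ := hm.mono_exponent (by
    rw [show (2:ℝ≥0∞) = ENNReal.ofReal 2 by simp]
    exact ENNReal.ofReal_le_ofReal (by linarith))
  exact h2.integrable_sq

lemma rg_mul_int {Ω : Type*} [MeasurableSpace Ω] {μ : Measure Ω}
    {f g : Ω → ℝ} (hf : Measurable f) (hg : Measurable g)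
    (hfsq : Integrable (fun ω => (f ω)^2) μ) (hgsq : Integrable (fun ω => (g ω)^2) μ) :
    Integrable (fun ω => f ω * g ω) μ := by
  refine Integrable.mono' (hfsq.add hgsq) ((hf.mul hg).aestronglyMeasurable)
    (ae_of_all _ fun ω => ?_)
  rw [Real.norm_eq_abs, abs_mul]
  simp only [Pi.add_apply]
  nlinarith [sq_nonneg (|f ω| - |g ω|), sq_abs (f ω), sq_abs (g ω),
    abs_nonneg (f ω), abs_nonneg (g ω)]

lemma rg_holder {Ω : Type*} [MeasurableSpace Ω] (μ : Measure Ω)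
    [IsProbabilityMeasure μ] {f : Ω → ℝ} (hf : Measurable f) {q : ℝ} (hq : 2 < q)
    (hint : Integrable (fun ω => |f ω| ^ q) μ) {A : Set Ω} (hA : MeasurableSet A) :
    ∫ ω, (f ω)^2 * A.indicator (fun _ => (1:ℝ)) ω ∂μ
      ≤ (∫ ω, |f ω| ^ q ∂μ) ^ (2/q) * ((μ A).toReal) ^ ((q-2)/q) := by
  have hq0 : (0:ℝ) < q := by linarith
  have hq2 : (0:ℝ) < q - 2 := by linarith
  have hconj : (q/2).HolderConjugate (q/(q-2)) := by
    refine (Real.holderConjugate_iff_eq_conjExponent (by linarith)).mpr ?_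
    have hq2' : q - 2 ≠ 0 := by linarith
    rw [eq_div_iff (by linarith)]
    field_simp
  have hfq : MemLp f (ENNReal.ofReal q) μ := rg_memLp hf hq0 hint
  have hmem1 : MemLp (fun ω => (f ω)^2) (ENNReal.ofReal (q/2)) μ := by
    have h := memLp_norm_rpow_iff (μ := μ) (p := ENNReal.ofReal q) (q := (2:ℝ≥0∞))
      hf.aestronglyMeasurable two_ne_zero ENNReal.ofNat_ne_top
    have h2 : ENNReal.ofReal q / 2 = ENNReal.ofReal (q/2) := by
      rw [ENNReal.ofReal_div_of_pos (by norm_num : (0:ℝ) < 2)]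
      norm_num
    have h3 : (fun x => ‖f x‖ ^ ((2:ℝ≥0∞)).toReal) = fun ω => (f ω)^2 := by
      funext ω
      rw [ENNReal.toReal_ofNat, Real.norm_eq_abs]
      rw [show ((2:ℝ)) = ((2:ℕ):ℝ) by norm_num, Real.rpow_natCast, sq_abs]
    rw [h2, h3] at h
    exact h.mpr hfq
  have hmem2 : MemLp (A.indicator (fun _ => (1:ℝ))) (ENNReal.ofReal (q/(q-2))) μ := by
    refine MemLp.mono_exponent ?_ le_top
    refine memLp_top_of_bound ((measurable_const.indicator hA).aestronglyMeasurable) 1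
      (ae_of_all _ fun ω => ?_)
    by_cases h : ω ∈ A <;> simp [Set.indicator_apply, h]
  have h := integral_mul_le_Lp_mul_Lq_of_nonneg hconj
    (ae_of_all _ fun ω => sq_nonneg (f ω))
    (ae_of_all _ fun ω => Set.indicator_nonneg (fun _ _ => zero_le_one) ω)
    hmem1 hmem2
  have e1 : ∫ ω, ((f ω)^2) ^ (q/2) ∂μ = ∫ ω, |f ω| ^ q ∂μ := by
    refine integral_congr_ae (ae_of_all _ fun ω => ?_)
    show (f ω ^ 2) ^ (q/2) = |f ω| ^ q
    rw [← sq_abs, ← Real.rpow_natCast |f ω| 2, ← Real.rpow_mul (abs_nonneg _)]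
    congr 1
    push_cast
    ring
  have e2 : ∫ ω, (A.indicator (fun _ => (1:ℝ)) ω) ^ (q/(q-2)) ∂μ = (μ A).toReal := by
    have : ∀ ω, (A.indicator (fun _ => (1:ℝ)) ω) ^ (q/(q-2)) = A.indicator (fun _ => (1:ℝ)) ω := by
      intro ω; by_cases h : ω ∈ A
      · rw [Set.indicator_of_mem h, Real.one_rpow]
      · rw [Set.indicator_of_notMem h]
        exact Real.zero_rpow (by positivity : q/(q-2) ≠ 0)
    simp_rw [this]
    exact integral_indicator_one hA
  rw [e1, e2] at h
  have e3 : 1/(q/2) = 2/q := by field_simp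
  have e4 : 1/(q/(q-2)) = (q-2)/q := by field_simp
  rw [e3, e4] at h
  exact h

lemma rg_cov_bound {Ω : Type*} [MeasurableSpace Ω] (μ : Measure Ω) [IsProbabilityMeasure μ]
    {δ ε C : ℝ} (hδ : 0 < δ) (hε1 : ε < 1) {n₀ : ℕ}
    (τ : Ω → ℕ∞) (hτ : Measurable τ)
    (hτtail : ∀ n : ℕ, 1 ≤ n → μ {ω | (n : ℕ∞) < τ ω} ≤ ENNReal.ofReal ((1 - ε) ^ (n - 1)))
    (Δ : ℕ → Ω → ℝ) (hΔmeas : ∀ n, Measurable (Δ n))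
    (hΔmom : ∀ n, Integrable (fun ω => |Δ n ω| ^ ((2 : ℝ) + δ)) μ)
    (hΔvanish : ∀ n : ℕ, 1 ≤ n → ∀ᵐ ω ∂μ, τ ω ≤ (n : ℕ∞) → Δ n ω = 0)
    (hΔbound : ∀ n, n₀ ≤ n → ∫ ω, |Δ n ω| ^ ((2 : ℝ) + δ) ∂μ ≤ C)
    {n k : ℕ} (hn₀ : n₀ ≤ n) (hn1 : 1 ≤ n) (hnk : n ≤ k) :
    |∫ ω, Δ n ω * Δ k ω ∂μ|
      ≤ C ^ ((2:ℝ)/(2+δ)) * ((1 - ε) ^ (δ/(2+δ))) ^ (k-1) := by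
  have hq2 : (2:ℝ) < 2 + δ := by linarith
  have hq0 : (0:ℝ) < 2 + δ := by linarith
  have hC0 : 0 ≤ C := le_trans (integral_nonneg fun ω => by positivity) (hΔbound n hn₀)
  have h1ε0 : (0:ℝ) < 1 - ε := by linarith
  have hk1 : 1 ≤ k := le_trans hn1 hnk
  set A : Set Ω := {ω | (k : ℕ∞) < τ ω} with hA
  have hAmeas : MeasurableSet A := hτ (MeasurableSet.of_discrete (s := Set.Ioi (k:ℕ∞)))
  have hμA : (μ A).toReal ≤ (1-ε)^(k-1) :=
    ENNReal.toReal_le_of_le_ofReal (by positivity) (hτtail k hk1)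
  have key : ∀ j, n₀ ≤ j → ∫ ω, (Δ j ω)^2 * A.indicator (fun _ => (1:ℝ)) ω ∂μ
      ≤ C ^ ((2:ℝ)/(2+δ)) * ((1-ε) ^ (δ/(2+δ)))^(k-1) := by
    intro j hj
    have h := rg_holder μ (hΔmeas j) hq2 (hΔmom j) hAmeas
    rw [show (2:ℝ)+δ-2 = δ by ring] at h
    refine le_trans h ?_
    have h1 : (∫ ω, |Δ j ω| ^ ((2:ℝ)+δ) ∂μ) ^ ((2:ℝ)/(2+δ)) ≤ C ^ ((2:ℝ)/(2+δ)) :=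
      Real.rpow_le_rpow (integral_nonneg fun ω => by positivity) (hΔbound j hj) (by positivity)
    have h2 : ((μ A).toReal) ^ (δ/(2+δ)) ≤ ((1-ε)^(k-1) : ℝ) ^ (δ/(2+δ)) :=
      Real.rpow_le_rpow ENNReal.toReal_nonneg hμA (by positivity)
    have h3 : ((1-ε)^(k-1) : ℝ) ^ (δ/(2+δ)) = ((1 - ε) ^ (δ/(2+δ))) ^ (k-1) := by
      rw [← Real.rpow_natCast (1-ε) (k-1), ← Real.rpow_mul h1ε0.le,
          mul_comm, Real.rpow_mul h1ε0.le, Real.rpow_natCast]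
    rw [h3] at h2
    exact mul_le_mul h1 h2 (Real.rpow_nonneg ENNReal.toReal_nonneg _) (Real.rpow_nonneg hC0 _)
  have hae : ∀ᵐ ω ∂μ, Δ n ω * Δ k ω
      = (Δ n ω * Δ k ω) * A.indicator (fun _ => (1:ℝ)) ω := by
    filter_upwards [hΔvanish k hk1] with ω hω
    by_cases h : ω ∈ A
    · rw [Set.indicator_of_mem h, mul_one]
    · have hτk : τ ω ≤ (k:ℕ∞) := not_lt.mp h
      rw [hω hτk, Set.indicator_of_notMem h]
      ring
  have hsq : ∀ j, Integrable (fun ω => (Δ j ω)^2) μ :=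
    fun j => rg_sq_int (hΔmeas j) (by linarith) (hΔmom j)
  have hsqind : ∀ j, Integrable
      (fun ω => (Δ j ω)^2 * A.indicator (fun _ => (1:ℝ)) ω) μ := by
    intro j
    have h := Integrable.bdd_mul (hsq j)
      ((measurable_const.indicator hAmeas :
        Measurable (A.indicator (fun _ => (1:ℝ)))).aestronglyMeasurable)
      (c := 1) (ae_of_all _ fun ω => by by_cases h : ω ∈ A <;> simp [Set.indicator_apply, h])
    exact h.congr (ae_of_all _ fun ω => by ring)
  have hdom : Integrable
      (fun ω => (Δ n ω)^2/2 * A.indicator (fun _ => (1:ℝ)) ω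
        + (Δ k ω)^2/2 * A.indicator (fun _ => (1:ℝ)) ω) μ := by
    refine Integrable.add ?_ ?_
    · exact ((hsqind n).div_const 2).congr (ae_of_all _ fun ω => by ring)
    · exact ((hsqind k).div_const 2).congr (ae_of_all _ fun ω => by ring)
  calc |∫ ω, Δ n ω * Δ k ω ∂μ|
      = |∫ ω, (Δ n ω * Δ k ω) * A.indicator (fun _ => (1:ℝ)) ω ∂μ| := by
        rw [integral_congr_ae hae]
    _ ≤ ∫ ω, |(Δ n ω * Δ k ω) * A.indicator (fun _ => (1:ℝ)) ω| ∂μ := by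
        have h := norm_integral_le_integral_norm
          (μ := μ) (fun ω => (Δ n ω * Δ k ω) * A.indicator (fun _ => (1:ℝ)) ω)
        simp only [Real.norm_eq_abs] at h
        exact h
    _ ≤ ∫ ω, ((Δ n ω)^2/2 * A.indicator (fun _ => (1:ℝ)) ω
          + (Δ k ω)^2/2 * A.indicator (fun _ => (1:ℝ)) ω) ∂μ := by
        refine integral_mono_of_nonneg (ae_of_all _ fun ω => abs_nonneg _) hdom
          (ae_of_all _ fun ω => ?_)
        dsimp only
        by_cases h : ω ∈ A
        · rw [Set.indicator_of_mem h]
          rw [mul_one, mul_one, mul_one, abs_mul]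
          nlinarith [sq_nonneg (|Δ n ω| - |Δ k ω|), sq_abs (Δ n ω), sq_abs (Δ k ω),
            abs_nonneg (Δ n ω), abs_nonneg (Δ k ω)]
        · rw [Set.indicator_of_notMem h]; simp
    _ = (1/2) * ∫ ω, (Δ n ω)^2 * A.indicator (fun _ => (1:ℝ)) ω ∂μ
          + (1/2) * ∫ ω, (Δ k ω)^2 * A.indicator (fun _ => (1:ℝ)) ω ∂μ := by
        rw [integral_add (((hsqind n).div_const 2).congr (ae_of_all _ fun ω => by ring))
          (((hsqind k).div_const 2).congr (ae_of_all _ fun ω => by ring))]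
        rw [show (fun ω => (Δ n ω)^2/2 * A.indicator (fun _ => (1:ℝ)) ω)
            = fun ω => (1/2) * ((Δ n ω)^2 * A.indicator (fun _ => (1:ℝ)) ω) from
            funext fun ω => by ring]
        rw [show (fun ω => (Δ k ω)^2/2 * A.indicator (fun _ => (1:ℝ)) ω)
            = fun ω => (1/2) * ((Δ k ω)^2 * A.indicator (fun _ => (1:ℝ)) ω) from
            funext fun ω => by ring]
        rw [integral_const_mul, integral_const_mul]
    _ ≤ C ^ ((2:ℝ)/(2+δ)) * ((1 - ε) ^ (δ/(2+δ))) ^ (k-1) := by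
        have b1 := key n hn₀
        have b2 := key k (le_trans hn₀ hnk)
        linarith

lemma rg_indep_split {Ω : Type*} [MeasurableSpace Ω] (μ : Measure Ω) [IsProbabilityMeasure μ]
    (Δ : ℕ → Ω → ℝ) (G : Ω → ℕ) (hG : Measurable G)
    (hGindep : Indep (MeasurableSpace.comap G inferInstance)
      (⨆ n : ℕ, MeasurableSpace.comap (Δ n) inferInstance) μ)
    (n k j : ℕ) (hint : Integrable (fun ω => Δ n ω * Δ k ω) μ) :
    ∫ ω, (Δ n ω * Δ k ω) * ({ω | j ≤ G ω}.indicator (fun _ => (1:ℝ))) ω ∂μ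
      = (∫ ω, Δ n ω * Δ k ω ∂μ)
        * ∫ ω, ({ω | j ≤ G ω}.indicator (fun _ => (1:ℝ))) ω ∂μ := by
  set X : Ω → ℝ := fun ω => Δ n ω * Δ k ω with hX
  set Y : Ω → ℝ := {ω | j ≤ G ω}.indicator (fun _ => (1:ℝ)) with hY
  have hYfac : Y = ({i : ℕ | j ≤ i}.indicator (fun _ => (1:ℝ))) ∘ G := rfl
  have hYcomap : MeasurableSpace.comap Y inferInstance
      ≤ MeasurableSpace.comap G inferInstance := by
    rw [hYfac, ← MeasurableSpace.comap_comp]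
    exact MeasurableSpace.comap_mono (measurable_from_top.comap_le)
  have hXcomap : MeasurableSpace.comap X inferInstance
      ≤ ⨆ n : ℕ, MeasurableSpace.comap (Δ n) inferInstance := by
    refine Measurable.comap_le ?_
    exact Measurable.mul
      (Measurable.of_comap_le (le_iSup (fun i : ℕ => MeasurableSpace.comap (Δ i) inferInstance) n))
      (Measurable.of_comap_le (le_iSup (fun i : ℕ => MeasurableSpace.comap (Δ i) inferInstance) k))
  have hIndep : IndepFun X Y μ := by
    rw [IndepFun_iff_Indep]
    exact indep_of_indep_of_le_right (indep_of_indep_of_le_left hGindep.symm hXcomap) hYcomap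
  have hYint : Integrable Y μ := by
    refine (integrable_const (1:ℝ)).indicator ?_
    exact hG measurableSet_Ici
  have := hIndep.integral_mul_eq_mul_integral hint.aestronglyMeasurable hYint.aestronglyMeasurable
  simpa [Pi.mul_apply] using this

end RGAux
set_option maxHeartbeats 2000000

/-- The truncated partial sums `Zₘ = ∑_{n=0}^m Δₙ 1{n ≤ G} / (1-p)^n` of the generalized
Rhee--Glynn estimator form a Cauchy sequence in `L²(ℙ)`, under the tail bound
`ℙ(τ > n) ≤ (1-ε)^(n-1)`, the vanishing of `Δₙ` on `{τ ≤ n}`, uniformly bounded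
`(2+δ)`-moments for large `n`, and a Geometric truncation variable `G`, independent of the
σ-algebra generated by `(Δₙ)`, with parameter `p` satisfying
`(1-ε)^(δ/(2+δ)) < 1 - p`. -/
theorem rheeGlynn_cauchy_L2 {Ω : Type*} [MeasurableSpace Ω]
    (μ : Measure Ω) [IsProbabilityMeasure μ]
    (δ : ℝ) (hδ : 0 < δ) (ε : ℝ) (hε0 : 0 < ε) (hε1 : ε < 1)
    (C : ℝ) (n₀ : ℕ) (p : ℝ) (hp0 : 0 < p) (hp1 : p < 1)
    (hpε : (1 - ε) ^ (δ / (2 + δ)) < 1 - p)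
    (τ : Ω → ℕ∞) (hτ : Measurable τ)
    (hτtail : ∀ n : ℕ, 1 ≤ n → μ {ω | (n : ℕ∞) < τ ω} ≤ ENNReal.ofReal ((1 - ε) ^ (n - 1)))
    (Δ : ℕ → Ω → ℝ) (hΔmeas : ∀ n, Measurable (Δ n))
    (hΔmom : ∀ n, Integrable (fun ω => |Δ n ω| ^ ((2 : ℝ) + δ)) μ)
    (hΔvanish : ∀ n : ℕ, 1 ≤ n → ∀ᵐ ω ∂μ, τ ω ≤ (n : ℕ∞) → Δ n ω = 0)
    (hΔbound : ∀ n, n₀ ≤ n → ∫ ω, |Δ n ω| ^ ((2 : ℝ) + δ) ∂μ ≤ C)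
    (G : Ω → ℕ) (hG : Measurable G)
    (hGgeom : ∀ n : ℕ, μ {ω | G ω = n} = ENNReal.ofReal ((1 - p) ^ n * p))
    (hGindep : Indep (MeasurableSpace.comap G inferInstance)
      (⨆ n : ℕ, MeasurableSpace.comap (Δ n) inferInstance) μ)
    (Z : ℕ → Ω → ℝ)
    (hZ_def : ∀ m ω, Z m ω
      = ∑ n ∈ Finset.range (m + 1), Δ n ω * (if n ≤ G ω then 1 else 0) / (1 - p) ^ n) :
    ∀ η : ℝ, 0 < η → ∃ M : ℕ, ∀ m m' : ℕ, M ≤ m → m ≤ m' →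
      ∫ ω, (Z m' ω - Z m ω) ^ 2 ∂μ < η := by
  intro η hη
  -- basic constants
  have hc0 : (0:ℝ) < 1 - p := by linarith
  have hc1 : (1:ℝ) - p < 1 := by linarith
  have hq0 : (0:ℝ) < 2 + δ := by linarith
  have h1ε0 : (0:ℝ) < 1 - ε := by linarith
  set r : ℝ := (1 - ε) ^ (δ / (2 + δ)) with hrdef
  have hr0 : 0 < r := Real.rpow_pos_of_pos h1ε0 _
  have hr1 : r < 1 := Real.rpow_lt_one h1ε0.le (by linarith) (by positivity)
  have hrc : r < 1 - p := hpε
  set s : ℝ := r / (1 - p) with hsdef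
  have hs0 : 0 < s := div_pos hr0 hc0
  have hs1 : s < 1 := (div_lt_one hc0).mpr hrc
  have hrs : r ≤ s := by
    rw [hsdef, le_div_iff₀ hc0]
    nlinarith
  set σ : ℝ := Real.sqrt s with hσdef
  have hσ0 : 0 < σ := Real.sqrt_pos.mpr hs0
  have hσ1 : σ < 1 := by
    rw [hσdef, show (1:ℝ) = Real.sqrt 1 by simp]
    exact Real.sqrt_lt_sqrt hs0.le hs1
  have hσsq : σ^2 = s := Real.sq_sqrt hs0.le
  have hC0 : 0 ≤ C := le_trans (integral_nonneg fun ω => by positivity) (hΔbound n₀ le_rfl)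
  set D : ℝ := C ^ ((2:ℝ)/(2+δ)) with hDdef
  have hD0 : 0 ≤ D := Real.rpow_nonneg hC0 _
  set K : ℝ := (D/r) / (1-σ)^2 with hKdef
  have hK0 : 0 ≤ K := by positivity
  -- choice of M
  obtain ⟨N, hN⟩ := exists_pow_lt_of_lt_one (show (0:ℝ) < η/(K+1) by positivity)
    (show σ^2 < 1 by nlinarith)
  refine ⟨max N (max n₀ 1), fun m m' hm hmm' => ?_⟩
  have hmn₀ : n₀ ≤ m := le_trans (le_trans (le_max_left n₀ 1) (le_max_right N _)) hm
  have hm1 : 1 ≤ m := le_trans (le_trans (le_max_right n₀ 1) (le_max_right N _)) hm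
  have hmN : N ≤ m := le_trans (le_max_left N _) hm
  -- integrability facts
  have hsqint : ∀ j, Integrable (fun ω => (Δ j ω)^2) μ :=
    fun j => rg_sq_int (hΔmeas j) hδ (hΔmom j)
  have hmulint : ∀ n k : ℕ, Integrable (fun ω => Δ n ω * Δ k ω) μ :=
    fun n k => rg_mul_int (hΔmeas n) (hΔmeas k) (hsqint n) (hsqint k)
  -- indicator basics
  have hGmeasSet : ∀ j : ℕ, MeasurableSet {ω | j ≤ G ω} := fun j => hG measurableSet_Ici
  have hite : ∀ (j : ℕ) (ω : Ω),
      ({ω' | j ≤ G ω'}.indicator (fun _ => (1:ℝ))) ω = if j ≤ G ω then 1 else 0 := by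
    intro j ω
    by_cases h : j ≤ G ω
    · rw [if_pos h]
      exact Set.indicator_of_mem (show ω ∈ {ω' | j ≤ G ω'} from h) (fun _ => (1:ℝ))
    · rw [if_neg h]
      exact Set.indicator_of_notMem (show ω ∉ {ω' | j ≤ G ω'} from h) (fun _ => (1:ℝ))
  have hindE : ∀ j : ℕ, ∫ ω, ({ω' | j ≤ G ω'}.indicator (fun _ => (1:ℝ))) ω ∂μ = (1-p)^j := by
    intro j
    have he : ({ω' | j ≤ G ω'}.indicator (fun _ => (1:ℝ))) = ({ω' | j ≤ G ω'}.indicator (1 : Ω → ℝ)) := rfl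
    rw [he, integral_indicator_one (hGmeasSet j), measureReal_def, rg_geomTail μ hp1 G hG hGgeom j,
      ENNReal.toReal_ofReal (by positivity)]
  have hindint_mul : ∀ (j : ℕ) (h : Ω → ℝ), Integrable h μ →
      Integrable (fun ω => h ω * ({ω' | j ≤ G ω'}.indicator (fun _ => (1:ℝ))) ω) μ := by
    intro j h hint
    have hb := Integrable.bdd_mul hint
      ((measurable_const.indicator (hGmeasSet j) :
        Measurable ({ω' | j ≤ G ω'}.indicator (fun _ => (1:ℝ)))).aestronglyMeasurable)
      (c := 1) (ae_of_all _ fun ω => by by_cases hc : j ≤ G ω <;>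
        simp [hite j ω, hc])
    exact hb.congr (ae_of_all _ fun ω => by ring)
  -- the summands
  set a : ℕ → Ω → ℝ :=
    fun n ω => Δ n ω * ({ω' | n ≤ G ω'}.indicator (fun _ => (1:ℝ))) ω / (1 - p) ^ n with hadef
  have hZdiff : ∀ ω, Z m' ω - Z m ω = ∑ n ∈ Finset.Ioc m m', a n ω := by
    intro ω
    have hIoc : Finset.Ioc m m' = Finset.Ico (m+1) (m'+1) := by
      ext x; simp only [Finset.mem_Ioc, Finset.mem_Ico]; omega
    have hsummand : ∀ n : ℕ, a n ω = Δ n ω * (if n ≤ G ω then 1 else 0) / (1 - p) ^ n := by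
      intro n; rw [hadef]; simp only []; rw [hite n ω]
    rw [hZ_def, hZ_def, Finset.range_eq_Ico, Finset.range_eq_Ico,
      ← Finset.sum_Ico_consecutive (fun n => Δ n ω * (if n ≤ G ω then 1 else 0) / (1 - p) ^ n)
        (Nat.zero_le (m+1)) (by omega : m+1 ≤ m'+1),
      add_sub_cancel_left, hIoc]
    exact (Finset.sum_congr rfl fun n _ => (hsummand n).symm)
  have haint : ∀ n k : ℕ, Integrable (fun ω => a n ω * a k ω) μ := by
    intro n k
    have h1 := hindint_mul n _ (hmulint n k)
    have h2 := hindint_mul k _ h1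
    refine (h2.mul_const (((1-p)^n)⁻¹ * ((1-p)^k)⁻¹)).congr (ae_of_all _ fun ω => ?_)
    rw [hadef]
    simp only []
    field_simp
  -- single term bound
  have hterm : ∀ n k : ℕ, n ∈ Finset.Ioc m m' → k ∈ Finset.Ioc m m' →
      ∫ ω, a n ω * a k ω ∂μ ≤ (D/r) * (σ^n * σ^k) := by
    intro n k hn hk
    rw [Finset.mem_Ioc] at hn hk
    have hint : ∫ ω, a n ω * a k ω ∂μ
        = (∫ ω, Δ n ω * Δ k ω ∂μ) * ((1-p)^(max n k) * (((1-p)^n)⁻¹ * ((1-p)^k)⁻¹)) := by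
      have hindmul : ∀ ω, ({ω' | n ≤ G ω'}.indicator (fun _ => (1:ℝ))) ω
          * ({ω' | k ≤ G ω'}.indicator (fun _ => (1:ℝ))) ω
          = ({ω' | max n k ≤ G ω'}.indicator (fun _ => (1:ℝ))) ω := by
        intro ω
        rw [hite, hite, hite]
        by_cases h1 : n ≤ G ω <;> by_cases h2 : k ≤ G ω <;>
          simp [h1, h2, max_le_iff]
      have e : ∀ ω, a n ω * a k ω
          = ((Δ n ω * Δ k ω) * ({ω' | max n k ≤ G ω'}.indicator (fun _ => (1:ℝ))) ω)
            * (((1-p)^n)⁻¹ * ((1-p)^k)⁻¹) := by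
        intro ω
        rw [hadef]
        simp only []
        rw [← hindmul ω]
        field_simp
      simp_rw [e]
      rw [integral_mul_const,
        rg_indep_split μ Δ G hG hGindep n k (max n k) (hmulint n k), hindE (max n k)]
      ring
    rw [hint]
    -- numeric bound
    have hn1' : 1 ≤ n := by omega
    have habs : |∫ ω, Δ n ω * Δ k ω ∂μ| ≤ D * r^(max n k - 1) := by
      rcases le_total n k with h | h
      · have hb := rg_cov_bound μ hδ hε1 τ hτ hτtail Δ hΔmeas hΔmom hΔvanish hΔbound
          (show n₀ ≤ n by omega) hn1' h
        rw [max_eq_right h]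
        exact hb
      · have hcomm : ∫ ω, Δ n ω * Δ k ω ∂μ = ∫ ω, Δ k ω * Δ n ω ∂μ :=
          integral_congr_ae (ae_of_all _ fun ω => mul_comm _ _)
        have hb := rg_cov_bound μ hδ hε1 τ hτ hτtail Δ hΔmeas hΔmom hΔvanish hΔbound
          (show n₀ ≤ k by omega) (show 1 ≤ k by omega) h
        rw [max_eq_left h, hcomm]
        exact hb
    have hfactor : (1-p)^(max n k) * (((1-p)^n)⁻¹ * ((1-p)^k)⁻¹) = ((1-p)^(min n k))⁻¹ := by
      have hnk : min n k + max n k = n + k := min_add_max n k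
      have hpow : (1-p)^n * (1-p)^k = (1-p)^(min n k) * (1-p)^(max n k) := by
        rw [← pow_add, ← pow_add, hnk]
      field_simp
      linarith [hpow]
    have hne : ∀ j : ℕ, ((1:ℝ)-p)^j ≠ 0 := fun j => pow_ne_zero j (ne_of_gt hc0)
    have hnk : min n k + max n k = n + k := min_add_max n k
    have hfactor : (1-p)^(max n k) * (((1-p)^n)⁻¹ * ((1-p)^k)⁻¹) = ((1-p)^(min n k))⁻¹ := by
      have hpow : ((1:ℝ)-p)^n * (1-p)^k = (1-p)^(min n k) * (1-p)^(max n k) := by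
        rw [← pow_add, ← pow_add]; congr 1; omega
      field_simp
      linarith [hpow]
    have hpowkey0 : r * (r^(max n k - 1) * ((1-p)^(min n k))⁻¹) ≤ σ^(n+k) := by
      have hL1 : 1 ≤ min n k := by omega
      have hLM : min n k ≤ max n k := min_le_max
      have e1 : r * r^(max n k - 1) = r^(max n k) := by
        rw [← pow_succ']; congr 1; omega
      have e2 : r^(max n k) = r^(max n k - min n k) * r^(min n k) := by
        rw [← pow_add]; congr 1; omega
      have e3 : r^(min n k) * (((1:ℝ)-p)^(min n k))⁻¹ = s^(min n k) := by
        rw [hsdef, div_pow, div_eq_mul_inv]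
      calc r * (r^(max n k - 1) * ((1-p)^(min n k))⁻¹)
          = r^(max n k - min n k) * (r^(min n k) * ((1-p)^(min n k))⁻¹) := by
            rw [← mul_assoc, e1, e2]; ring
        _ = r^(max n k - min n k) * s^(min n k) := by rw [e3]
        _ ≤ s^(max n k - min n k) * s^(min n k) := by
            exact mul_le_mul_of_nonneg_right (pow_le_pow_left₀ hr0.le hrs _) (by positivity)
        _ = s^(max n k) := by rw [← pow_add]; congr 1; omega
        _ = σ^(2 * max n k) := by rw [pow_mul, hσsq]
        _ ≤ σ^(n+k) := pow_le_pow_of_le_one hσ0.le hσ1.le (by omega)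
    have hpowkey : r^(max n k - 1) * ((1-p)^(min n k))⁻¹ ≤ σ^(n+k) / r := by
      rw [le_div_iff₀ hr0]
      calc r^(max n k - 1) * ((1-p)^(min n k))⁻¹ * r
          = r * (r^(max n k - 1) * ((1-p)^(min n k))⁻¹) := by ring
        _ ≤ σ^(n+k) := hpowkey0
    rw [hfactor]
    calc (∫ ω, Δ n ω * Δ k ω ∂μ) * ((1-p)^(min n k))⁻¹
        ≤ |∫ ω, Δ n ω * Δ k ω ∂μ| * ((1-p)^(min n k))⁻¹ :=
          mul_le_mul_of_nonneg_right (le_abs_self _) (by positivity)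
      _ ≤ (D * r^(max n k - 1)) * ((1-p)^(min n k))⁻¹ :=
          mul_le_mul_of_nonneg_right habs (by positivity)
      _ = D * (r^(max n k - 1) * ((1-p)^(min n k))⁻¹) := by ring
      _ ≤ D * (σ^(n+k) / r) := mul_le_mul_of_nonneg_left hpowkey hD0
      _ = (D/r) * (σ^n * σ^k) := by rw [pow_add]; ring
  -- assemble
  have hsqexp : ∀ ω, (Z m' ω - Z m ω)^2
      = ∑ n ∈ Finset.Ioc m m', ∑ k ∈ Finset.Ioc m m', a n ω * a k ω := by
    intro ω
    rw [hZdiff ω, sq, Finset.sum_mul_sum]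
  have hsumle : ∑ n ∈ Finset.Ioc m m', σ^n ≤ σ^(m+1)/(1-σ) := by
    have hIoc : Finset.Ioc m m' = Finset.Ico (m+1) (m'+1) := by
      ext x; simp only [Finset.mem_Ioc, Finset.mem_Ico]; omega
    rw [hIoc]
    exact geom_sum_Ico_le_of_lt_one hσ0.le hσ1
  have hsumnn : 0 ≤ ∑ n ∈ Finset.Ioc m m', σ^n :=
    Finset.sum_nonneg fun n _ => by positivity
  calc ∫ ω, (Z m' ω - Z m ω)^2 ∂μ
      = ∑ n ∈ Finset.Ioc m m', ∑ k ∈ Finset.Ioc m m', ∫ ω, a n ω * a k ω ∂μ := by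
        simp_rw [hsqexp]
        rw [integral_finset_sum _
          (fun n _ => integrable_finset_sum _ (fun k _ => haint n k))]
        exact Finset.sum_congr rfl fun n _ =>
          integral_finset_sum _ (fun k _ => haint n k)
    _ ≤ ∑ n ∈ Finset.Ioc m m', ∑ k ∈ Finset.Ioc m m', (D/r) * (σ^n * σ^k) :=
        Finset.sum_le_sum fun n hn => Finset.sum_le_sum fun k hk => hterm n k hn hk
    _ = (D/r) * ((∑ n ∈ Finset.Ioc m m', σ^n) * (∑ k ∈ Finset.Ioc m m', σ^k)) := by
        rw [Finset.sum_mul_sum]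
        simp_rw [Finset.mul_sum]
    _ ≤ (D/r) * ((σ^(m+1)/(1-σ)) * (σ^(m+1)/(1-σ))) := by
        refine mul_le_mul_of_nonneg_left ?_ (by positivity)
        exact mul_le_mul hsumle hsumle hsumnn (div_nonneg (by positivity) (by linarith))
    _ = K * (σ^2)^(m+1) := by
        rw [hKdef, show (σ^2)^(m+1) = (σ^(m+1))^2 by rw [← pow_mul, ← pow_mul, mul_comm]]
        have h1σ : (1:ℝ) - σ ≠ 0 := by linarith
        field_simp
    _ ≤ (K+1) * (σ^2)^(m+1) :=
        mul_le_mul_of_nonneg_right (by linarith) (by positivity)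
    _ < (K+1) * (η/(K+1)) := by
        refine mul_lt_mul_of_pos_left ?_ (by linarith)
        have hσ2le : σ^2 ≤ 1 := by nlinarith
        calc (σ^2)^(m+1) ≤ (σ^2)^N :=
              pow_le_pow_of_le_one (by positivity) hσ2le (by omega)
          _ < η/(K+1) := hN
    _ = η := by
        have hK1 : K + 1 ≠ 0 := by linarith
        field_simp
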